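/- Let n, r ≥ 1. Let g = (g_{ij}) be an invertible symmetric real n×n matrix, e ∈ ℝ^n, and set ε_j := Σ_i g_{ij} e_i. Let F_M : ℝ^n → ℝ be a smooth function satisfying the unit condition Σ_i e_i ∂_i∂_j∂_k F_M(t) = g_{jk} for all t ∈ ℝ^n and all 1 ≤ j,k ≤ n. For each t ∈ ℝ^n let ∘_M(t) be the bilinear multiplication on ℝ^n determined by Σ_k g_{kl} (X ∘_M(t) Y)_k = Σ_{i,j} ∂_i∂_j∂_l F_M(t) X_i Y_j. Let ∘_V be a commutative associative bilinear multiplication on ℝ^r with unit e_V, g_V a symmetric bilinear form on ℝ^r with g_V(v ∘_V w, u) = g_V(v, w ∘_V u), and λ : ℝ^r → ℝ a linear functional with λ(e_V) = 1 and λ(v ∘_V w) = λ(v)λ(w). With the standard basis (E_s) of ℝ^r, set λ_s := λ(E_s), Λ_{sk} := λ(E_s ∘_V E_k), c_{skj} := g_V(E_s ∘_V E_k, E_j), and define F : ℝ^n × ℝ^r → ℝ by F(t,τ) = F_M(t) + (1/2)(Σ_s λ_s τ_s)(Σ_{i,j} g_{ij} t_i t_j) + (1/2)(Σ_{s,k}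 Λ_{sk} τ_s τ_k)(Σ_j ε_j t_j) + (1/6) Σ_{s,k,j} c_{skj} τ_s τ_k τ_j. Define the multiplication ∘ on ℝ^n ⊕ ℝ^r (depending on t) by (X,v) ∘ (Y,w) = (X ∘_M(t) Y + λ(w)·X + λ(v)·Y, v ∘_V w), and the symmetric bilinear form G on ℝ^n ⊕ ℝ^r by G((X,v),(Y,w)) = Σ_{i,j} g_{ij} X_i Y_j + λ(v)·Σ_j ε_j Y_j + λ(w)·Σ_i ε_i X_i + g_V(v,w). Then for all (t,τ) and all (X,v), (Y,w), (Z,u) ∈ ℝ^n ⊕ ℝ^r, the third derivative of F satisfies D³F(t,τ)((X,v),(Y,w),(Z,u)) = G((X,v) ∘ (Y,w), (Z,u)), i.e. F is a potential for the extended structure (∘, G). -/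

import Mathlib

set_option maxHeartbeats 4000000

open ContinuousLinearMap
open scoped ContDiff

section Stmt8Aux

variable {E : Type*} [NormedAddCommGroup E] [NormedSpace ℝ E]

theorem stmt8aux_itfd3 (f : E → ℝ) (x a b c : E) :
    iteratedFDeriv ℝ 3 f x ![a, b, c]
      = fderiv ℝ (fderiv ℝ (fderiv ℝ f)) x a b c := by
  rw [iteratedFDeriv_succ_apply_right, iteratedFDeriv_two_apply]; rfl

theorem stmt8aux_fderiv_eval {F : Type*} [NormedAddCommGroup F] [NormedSpace ℝ F]
    {A : E → (E →L[ℝ] F)} {x : E} (hA : DifferentiableAt ℝ A x) (v : E) :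
    fderiv ℝ (fun y => A y v) x = (ContinuousLinearMap.apply ℝ F v).comp (fderiv ℝ A x) :=
  ((ContinuousLinearMap.apply ℝ F v).hasFDerivAt.comp x hA.hasFDerivAt).fderiv

theorem stmt8aux_eval2 {A : E → (E →L[ℝ] (E →L[ℝ] ℝ))} (hA : Differentiable ℝ A)
    (x a b c : E) :
    fderiv ℝ (fun y => A y b c) x a = fderiv ℝ A x a b c := by
  have hB : Differentiable ℝ (fun y => A y b) := fun y =>
    (hA y).clm_apply (differentiableAt_const b)
  rw [stmt8aux_fderiv_eval (hB x) c, stmt8aux_fderiv_eval (hA x) b]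
  rfl

theorem stmt8aux_sym12 {f : E → ℝ} (hf : ContDiff ℝ (⊤ : ℕ∞) f) (x a b c : E) :
    iteratedFDeriv ℝ 3 f x ![a, b, c] = iteratedFDeriv ℝ 3 f x ![b, a, c] := by
  rw [stmt8aux_itfd3, stmt8aux_itfd3]
  have h1 : Differentiable ℝ (fderiv ℝ f) :=
    (hf.fderiv_right (m := ∞) (by norm_num)).differentiable (by norm_num)
  have h2 : Differentiable ℝ (fderiv ℝ (fderiv ℝ f)) :=
    ((hf.fderiv_right (m := ∞) (by norm_num)).fderiv_right (m := ∞)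
      (by norm_num)).differentiable (by norm_num)
  have := second_derivative_symmetric (f := fderiv ℝ f) (f' := fderiv ℝ (fderiv ℝ f))
    (f'' := fderiv ℝ (fderiv ℝ (fderiv ℝ f)) x) (fun y => (h1 y).hasFDerivAt)
    ((h2 x).hasFDerivAt) a b
  exact congrArg (fun M => M c) this

theorem stmt8aux_sym23 {f : E → ℝ} (hf : ContDiff ℝ (⊤ : ℕ∞) f) (x a b c : E) :
    iteratedFDeriv ℝ 3 f x ![a, b, c] = iteratedFDeriv ℝ 3 f x ![a, c, b] := by
  rw [stmt8aux_itfd3, stmt8aux_itfd3]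
  have h0 : Differentiable ℝ f := hf.differentiable (by norm_num)
  have h1 : Differentiable ℝ (fderiv ℝ f) :=
    (hf.fderiv_right (m := ∞) (by norm_num)).differentiable (by norm_num)
  have h2 : Differentiable ℝ (fderiv ℝ (fderiv ℝ f)) :=
    ((hf.fderiv_right (m := ∞) (by norm_num)).fderiv_right (m := ∞)
      (by norm_num)).differentiable (by norm_num)
  have hsym : ∀ y, (fun y => fderiv ℝ (fderiv ℝ f) y b c) y
      = (fun y => fderiv ℝ (fderiv ℝ f) y c b) y := by
    intro y
    exact second_derivative_symmetric (fun z => (h0 z).hasFDerivAt) ((h1 y).hasFDerivAt) b c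
  calc fderiv ℝ (fderiv ℝ (fderiv ℝ f)) x a b c
      = fderiv ℝ (fun y => fderiv ℝ (fderiv ℝ f) y b c) x a :=
        (stmt8aux_eval2 h2 x a b c).symm
    _ = fderiv ℝ (fun y => fderiv ℝ (fderiv ℝ f) y c b) x a := by rw [funext hsym]
    _ = fderiv ℝ (fderiv ℝ (fderiv ℝ f)) x a c b := stmt8aux_eval2 h2 x a c b

theorem stmt8aux_cycle {f : E → ℝ} (hf : ContDiff ℝ (⊤ : ℕ∞) f) (x a b c : E) :
    iteratedFDeriv ℝ 3 f x ![a, b, c] = iteratedFDeriv ℝ 3 f x ![c, a, b] := by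
  rw [stmt8aux_sym23 hf, stmt8aux_sym12 hf]

theorem stmt8aux_d3_mono (ℓ₁ ℓ₂ ℓ₃ : E →L[ℝ] ℝ) (x a b c : E) :
    iteratedFDeriv ℝ 3 (fun z => ℓ₁ z * ℓ₂ z * ℓ₃ z) x ![a, b, c]
      = ℓ₁ a * ℓ₂ b * ℓ₃ c + ℓ₁ b * ℓ₂ a * ℓ₃ c + ℓ₁ a * ℓ₂ c * ℓ₃ b
        + ℓ₁ c * ℓ₂ a * ℓ₃ b + ℓ₁ b * ℓ₂ c * ℓ₃ a + ℓ₁ c * ℓ₂ b * ℓ₃ a := by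
  have h1 : fderiv ℝ (fun z => ℓ₁ z * ℓ₂ z * ℓ₃ z)
      = fun y => (ℓ₂ y * ℓ₃ y) • ℓ₁ + (ℓ₁ y * ℓ₃ y) • ℓ₂ + (ℓ₁ y * ℓ₂ y) • ℓ₃ := by
    funext y
    rw [HasFDerivAt.fderiv (f := fun z => ℓ₁ z * ℓ₂ z * ℓ₃ z)
      ((ℓ₁.hasFDerivAt.mul ℓ₂.hasFDerivAt).mul ℓ₃.hasFDerivAt)]
    ext z; simp; ring
  have h2 : fderiv ℝ (fderiv ℝ (fun z => ℓ₁ z * ℓ₂ z * ℓ₃ z))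
      = fun y => (ℓ₂ y • ℓ₃.smulRight ℓ₁ + ℓ₃ y • ℓ₂.smulRight ℓ₁)
          + (ℓ₁ y • ℓ₃.smulRight ℓ₂ + ℓ₃ y • ℓ₁.smulRight ℓ₂)
          + (ℓ₁ y • ℓ₂.smulRight ℓ₃ + ℓ₂ y • ℓ₁.smulRight ℓ₃) := by
    rw [h1]; funext y
    have e1 : HasFDerivAt (fun y : E => (ℓ₂ y * ℓ₃ y) • ℓ₁ + (ℓ₁ y * ℓ₃ y) • ℓ₂
        + (ℓ₁ y * ℓ₂ y) • ℓ₃)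
        (((ℓ₂ y • ℓ₃ + ℓ₃ y • ℓ₂).smulRight ℓ₁ + (ℓ₁ y • ℓ₃ + ℓ₃ y • ℓ₁).smulRight ℓ₂)
          + (ℓ₁ y • ℓ₂ + ℓ₂ y • ℓ₁).smulRight ℓ₃) y :=
      (((ℓ₂.hasFDerivAt.mul ℓ₃.hasFDerivAt).smul_const ℓ₁).add
        ((ℓ₁.hasFDerivAt.mul ℓ₃.hasFDerivAt).smul_const ℓ₂)).add
        ((ℓ₁.hasFDerivAt.mul ℓ₂.hasFDerivAt).smul_const ℓ₃)
    rw [e1.fderiv]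
    ext z z'; simp; ring
  rw [stmt8aux_itfd3, h2]
  haveI : IsBoundedSMul ℝ (E →L[ℝ] E →L[ℝ] ℝ) :=
    NormedSpace.toIsBoundedSMul (𝕜 := ℝ) (E := E →L[ℝ] E →L[ℝ] ℝ)
  haveI : ContinuousAdd (E →L[ℝ] E →L[ℝ] ℝ) :=
    ContinuousLinearMap.topologicalAddGroup.toContinuousAdd
  have e2 : HasFDerivAt (fun y : E => (ℓ₂ y • ℓ₃.smulRight ℓ₁ + ℓ₃ y • ℓ₂.smulRight ℓ₁)
          + (ℓ₁ y • ℓ₃.smulRight ℓ₂ + ℓ₃ y • ℓ₁.smulRight ℓ₂)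
          + (ℓ₁ y • ℓ₂.smulRight ℓ₃ + ℓ₂ y • ℓ₁.smulRight ℓ₃))
      (((ℓ₂.smulRight (ℓ₃.smulRight ℓ₁)) + (ℓ₃.smulRight (ℓ₂.smulRight ℓ₁)))
        + ((ℓ₁.smulRight (ℓ₃.smulRight ℓ₂)) + (ℓ₃.smulRight (ℓ₁.smulRight ℓ₂)))
        + ((ℓ₁.smulRight (ℓ₂.smulRight ℓ₃)) + (ℓ₂.smulRight (ℓ₁.smulRight ℓ₃)))) x :=
    (((ℓ₂.hasFDerivAt.smul_const (ℓ₃.smulRight ℓ₁)).add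
        (ℓ₃.hasFDerivAt.smul_const (ℓ₂.smulRight ℓ₁))).add
      ((ℓ₁.hasFDerivAt.smul_const (ℓ₃.smulRight ℓ₂)).add
        (ℓ₃.hasFDerivAt.smul_const (ℓ₁.smulRight ℓ₂)))).add
      ((ℓ₁.hasFDerivAt.smul_const (ℓ₂.smulRight ℓ₃)).add
        (ℓ₂.hasFDerivAt.smul_const (ℓ₁.smulRight ℓ₃)))
  rw [e2.fderiv]
  simp; ring

theorem stmt8aux_d3_sum3 {α β γ : Type*} [Fintype α] [Fintype β] [Fintype γ]
    (f : α → β → γ → E → ℝ) (hf : ∀ a b c, ContDiff ℝ (3 : ℕ) (f a b c)) (x : E)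
    (m : Fin 3 → E) :
    iteratedFDeriv ℝ 3 (fun z => ∑ a, ∑ b, ∑ c, f a b c z) x m
      = ∑ a, ∑ b, ∑ c, iteratedFDeriv ℝ 3 (f a b c) x m := by
  have h1 := iteratedFDeriv_sum (𝕜 := ℝ) (i := 3)
    (f := fun a : α => fun z => ∑ b, ∑ c, f a b c z) (u := Finset.univ)
    (fun a _ => ContDiff.sum fun b _ => ContDiff.sum fun c _ => hf a b c)
  have h2 : ∀ a : α, iteratedFDeriv ℝ 3 (fun z => ∑ b, ∑ c, f a b c z) x m
      = ∑ b, ∑ c, iteratedFDeriv ℝ 3 (f a b c) x m := by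
    intro a
    have h2a := iteratedFDeriv_sum (𝕜 := ℝ) (i := 3)
      (f := fun b : β => fun z => ∑ c, f a b c z) (u := Finset.univ)
      (fun b _ => ContDiff.sum fun c _ => hf a b c)
    have h2b : ∀ b : β, iteratedFDeriv ℝ 3 (fun z => ∑ c, f a b c z) x m
        = ∑ c, iteratedFDeriv ℝ 3 (f a b c) x m := by
      intro b
      have h2c := iteratedFDeriv_sum (𝕜 := ℝ) (i := 3)
        (f := fun c : γ => f a b c) (u := Finset.univ) (fun c _ => hf a b c)
      rw [show (fun z => ∑ c, f a b c z) = (∑ c : γ, f a b c ·) from rfl,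
        congrFun h2c x]
      simp [ContinuousMultilinearMap.sum_apply]
    rw [show (fun z => ∑ b, ∑ c, f a b c z) = (∑ b : β, (fun z => ∑ c, f a b c z) ·) from rfl,
      congrFun h2a x]
    simp only [ContinuousMultilinearMap.sum_apply, Finset.sum_apply]
    exact Finset.sum_congr rfl fun b _ => h2b b
  rw [show (fun z => ∑ a, ∑ b, ∑ c, f a b c z)
      = (∑ a : α, (fun z => ∑ b, ∑ c, f a b c z) ·) from rfl, congrFun h1 x]
  simp only [ContinuousMultilinearMap.sum_apply, Finset.sum_apply]
  exact Finset.sum_congr rfl fun a _ => h2 a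

theorem stmt8aux_slot0 {n : ℕ} (M : ContinuousMultilinearMap ℝ (fun _ : Fin 3 => (Fin n → ℝ)) ℝ)
    (X Y Z : Fin n → ℝ) :
    M ![X, Y, Z] = ∑ i, X i * M ![Pi.single i 1, Y, Z] := by
  have hX : X = ∑ i, X i • (Pi.single i 1 : Fin n → ℝ) := by
    funext j
    simp [Pi.single_apply, Finset.sum_apply, mul_comm]
  have h0 : ∀ W : Fin n → ℝ, Function.update ![X, Y, Z] 0 W = ![W, Y, Z] := by
    intro W; funext i; fin_cases i <;> simp [Function.update]
  calc M ![X, Y, Z] = M (Function.update ![X, Y, Z] 0 X) := by rw [h0]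
    _ = (M.toContinuousLinearMap ![X, Y, Z] 0) X := rfl
    _ = (M.toContinuousLinearMap ![X, Y, Z] 0) (∑ i, X i • (Pi.single i 1 : Fin n → ℝ)) := by
        rw [← hX]
    _ = ∑ i, X i * M ![Pi.single i 1, Y, Z] := by
        rw [map_sum]
        refine Finset.sum_congr rfl fun i _ => ?_
        rw [map_smul]
        simp [h0]

theorem stmt8aux_slot1 {n : ℕ} (M : ContinuousMultilinearMap ℝ (fun _ : Fin 3 => (Fin n → ℝ)) ℝ)
    (X Y Z : Fin n → ℝ) :
    M ![X, Y, Z] = ∑ i, Y i * M ![X, Pi.single i 1, Z] := by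
  have hX : Y = ∑ i, Y i • (Pi.single i 1 : Fin n → ℝ) := by
    funext j
    simp [Pi.single_apply, Finset.sum_apply, mul_comm]
  have h0 : ∀ W : Fin n → ℝ, Function.update ![X, Y, Z] 1 W = ![X, W, Z] := by
    intro W; funext i; fin_cases i <;> simp [Function.update]
  calc M ![X, Y, Z] = M (Function.update ![X, Y, Z] 1 Y) := by rw [h0]
    _ = (M.toContinuousLinearMap ![X, Y, Z] 1) Y := rfl
    _ = (M.toContinuousLinearMap ![X, Y, Z] 1) (∑ i, Y i • (Pi.single i 1 : Fin n → ℝ)) := by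
        rw [← hX]
    _ = ∑ i, Y i * M ![X, Pi.single i 1, Z] := by
        rw [map_sum]
        refine Finset.sum_congr rfl fun i _ => ?_
        rw [map_smul]
        simp [h0]

theorem stmt8aux_slot2 {n : ℕ} (M : ContinuousMultilinearMap ℝ (fun _ : Fin 3 => (Fin n → ℝ)) ℝ)
    (X Y Z : Fin n → ℝ) :
    M ![X, Y, Z] = ∑ i, Z i * M ![X, Y, Pi.single i 1] := by
  have hX : Z = ∑ i, Z i • (Pi.single i 1 : Fin n → ℝ) := by
    funext j
    simp [Pi.single_apply, Finset.sum_apply, mul_comm]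
  have h0 : ∀ W : Fin n → ℝ, Function.update ![X, Y, Z] 2 W = ![X, Y, W] := by
    intro W; funext i; fin_cases i <;> simp [Function.update]
  calc M ![X, Y, Z] = M (Function.update ![X, Y, Z] 2 Z) := by rw [h0]
    _ = (M.toContinuousLinearMap ![X, Y, Z] 2) Z := rfl
    _ = (M.toContinuousLinearMap ![X, Y, Z] 2) (∑ i, Z i • (Pi.single i 1 : Fin n → ℝ)) := by
        rw [← hX]
    _ = ∑ i, Z i * M ![X, Y, Pi.single i 1] := by
        rw [map_sum]
        refine Finset.sum_congr rfl fun i _ => ?_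
        rw [map_smul]
        simp [h0]

theorem stmt8aux_tri_basis {n : ℕ}
    (M : ContinuousMultilinearMap ℝ (fun _ : Fin 3 => (Fin n → ℝ)) ℝ)
    (X Y Z : Fin n → ℝ) :
    M ![X, Y, Z] = ∑ i, ∑ j, ∑ k,
      M ![Pi.single i 1, Pi.single j 1, Pi.single k 1] * X i * Y j * Z k := by
  rw [stmt8aux_slot0]
  refine Finset.sum_congr rfl fun i _ => ?_
  rw [stmt8aux_slot1 M (Pi.single i 1), Finset.mul_sum]
  refine Finset.sum_congr rfl fun j _ => ?_
  rw [stmt8aux_slot2 M (Pi.single i 1) (Pi.single j 1), Finset.mul_sum, Finset.mul_sum]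
  refine Finset.sum_congr rfl fun k _ => ?_
  ring

theorem stmt8aux_csum12 {α β γ : Type*} [Fintype α] [Fintype β] [Fintype γ]
    (k : ℝ) (a : α → ℝ) (bc : β → γ → ℝ) :
    k * (∑ s, a s) * (∑ i, ∑ j, bc i j) = ∑ s, ∑ i, ∑ j, k * a s * bc i j := by
  rw [show k * (∑ s, a s) = ∑ s, k * a s from Finset.mul_sum _ _ _, Finset.sum_mul]
  refine Finset.sum_congr rfl fun s _ => ?_
  rw [Finset.mul_sum]
  refine Finset.sum_congr rfl fun i _ => ?_
  rw [Finset.mul_sum]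

theorem stmt8aux_csum21 {α β γ : Type*} [Fintype α] [Fintype β] [Fintype γ]
    (k : ℝ) (ab : α → β → ℝ) (c : γ → ℝ) :
    k * (∑ s, ∑ i, ab s i) * (∑ j, c j) = ∑ s, ∑ i, ∑ j, k * ab s i * c j := by
  rw [show k * (∑ s, ∑ i, ab s i) = ∑ s, ∑ i, k * ab s i by
      rw [Finset.mul_sum]; exact Finset.sum_congr rfl fun s _ => Finset.mul_sum _ _ _,
    Finset.sum_mul]
  refine Finset.sum_congr rfl fun s _ => ?_
  rw [Finset.sum_mul]
  refine Finset.sum_congr rfl fun i _ => ?_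
  rw [Finset.mul_sum]

theorem stmt8aux_csum3 {α β γ : Type*} [Fintype α] [Fintype β] [Fintype γ]
    (k : ℝ) (f : α → β → γ → ℝ) :
    k * (∑ s, ∑ i, ∑ j, f s i j) = ∑ s, ∑ i, ∑ j, k * f s i j := by
  rw [Finset.mul_sum]
  refine Finset.sum_congr rfl fun s _ => ?_
  rw [Finset.mul_sum]
  refine Finset.sum_congr rfl fun i _ => ?_
  rw [Finset.mul_sum]

end Stmt8Aux
section Stmt8Aux2

theorem stmt8aux_swap3 {α β γ : Type*} [Fintype α] [Fintype β] [Fintype γ]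
    (f : α → β → γ → ℝ) (z : γ → ℝ) :
    (∑ j, (∑ a, ∑ b, f a b j) * z j) = ∑ a, ∑ b, ∑ j, f a b j * z j := by
  calc (∑ j, (∑ a, ∑ b, f a b j) * z j) = ∑ j, ∑ a, ∑ b, f a b j * z j := by
        refine Finset.sum_congr rfl fun j _ => ?_
        rw [Finset.sum_mul]
        exact Finset.sum_congr rfl fun a _ => Finset.sum_mul _ _ _
    _ = ∑ a, ∑ j, ∑ b, f a b j * z j := Finset.sum_comm
    _ = ∑ a, ∑ b, ∑ j, f a b j * z j := Finset.sum_congr rfl fun a _ => Finset.sum_comm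

noncomputable def stmt8aux_rho (n r : ℕ) (i : Fin n) : ((Fin n → ℝ) × (Fin r → ℝ)) →L[ℝ] ℝ :=
  (ContinuousLinearMap.proj i).comp (ContinuousLinearMap.fst ℝ (Fin n → ℝ) (Fin r → ℝ))

noncomputable def stmt8aux_sig (n r : ℕ) (s : Fin r) : ((Fin n → ℝ) × (Fin r → ℝ)) →L[ℝ] ℝ :=
  (ContinuousLinearMap.proj s).comp (ContinuousLinearMap.snd ℝ (Fin n → ℝ) (Fin r → ℝ))

@[simp] theorem stmt8aux_rho_apply (n r : ℕ) (i : Fin n) (z : (Fin n → ℝ) × (Fin r → ℝ)) :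
    stmt8aux_rho n r i z = z.1 i := rfl

@[simp] theorem stmt8aux_sig_apply (n r : ℕ) (s : Fin r) (z : (Fin n → ℝ) × (Fin r → ℝ)) :
    stmt8aux_sig n r s z = z.2 s := rfl

end Stmt8Aux2
/-- in flat coordinates, the function
`F(t,τ) = F_M(t) + ½(Σ λ_s τ_s)(Σ g_{ij} t_i t_j) + ½(Σ Λ_{sk} τ_s τ_k)(Σ ε_j t_j)
         + ⅙ Σ c_{skj} τ_s τ_k τ_j`
is a potential for the extended multiplication
`(X,v) ∘ (Y,w) = (X ∘_M Y + λ(w)X + λ(v)Y, v ∘_V w)` and extended metric `G`: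
its third derivative in directions `(X,v), (Y,w), (Z,u)` equals
`G((X,v) ∘ (Y,w), (Z,u))`. -/
theorem stmt8 (n r : ℕ) (hn : 1 ≤ n) (hr : 1 ≤ r)
    (g : Matrix (Fin n) (Fin n) ℝ) (hgsymm : ∀ i j, g i j = g j i)
    (hginv : IsUnit g)
    (e : Fin n → ℝ)
    (FM : (Fin n → ℝ) → ℝ) (hFM : ContDiff ℝ (⊤ : ℕ∞) FM)
    (hunit : ∀ (t : Fin n → ℝ) (j k : Fin n),
      ∑ i, e i * iteratedFDeriv ℝ 3 FM t
          ![Pi.single i 1, Pi.single j 1, Pi.single k 1] = g j k)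
    (circM : (Fin n → ℝ) → (Fin n → ℝ) → (Fin n → ℝ) → Fin n → ℝ)
    (hcircM : ∀ (t X Y : Fin n → ℝ) (l : Fin n),
      ∑ k, g k l * circM t X Y k
        = ∑ i, ∑ j, iteratedFDeriv ℝ 3 FM t
            ![Pi.single i 1, Pi.single j 1, Pi.single l 1] * X i * Y j)
    (circV : (Fin r → ℝ) →ₗ[ℝ] (Fin r → ℝ) →ₗ[ℝ] (Fin r → ℝ))
    (hVcomm : ∀ v w, circV v w = circV w v)
    (hVassoc : ∀ u v w, circV (circV u v) w = circV u (circV v w))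
    (eV : Fin r → ℝ) (hVunit : ∀ v, circV v eV = v)
    (gV : (Fin r → ℝ) →ₗ[ℝ] (Fin r → ℝ) →ₗ[ℝ] ℝ)
    (hgVsymm : ∀ v w, gV v w = gV w v)
    (hgVinv : ∀ u v w, gV (circV u v) w = gV u (circV v w))
    (lam : (Fin r → ℝ) →ₗ[ℝ] ℝ)
    (hlam1 : lam eV = 1)
    (hlammul : ∀ v w, lam (circV v w) = lam v * lam w)
    (F : (Fin n → ℝ) × (Fin r → ℝ) → ℝ)
    (hF : ∀ (t : Fin n → ℝ) (τ : Fin r → ℝ),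
      F (t, τ) = FM t
        + (1 / 2) * (∑ s, lam (Pi.single s 1) * τ s) * (∑ i, ∑ j, g i j * t i * t j)
        + (1 / 2) * (∑ s, ∑ k, lam (circV (Pi.single s 1) (Pi.single k 1)) * τ s * τ k)
            * (∑ j, (∑ i, g i j * e i) * t j)
        + (1 / 6) * ∑ s, ∑ k, ∑ j,
            gV (circV (Pi.single s 1) (Pi.single k 1)) (Pi.single j 1)
              * τ s * τ k * τ j) :
    ∀ (t : Fin n → ℝ) (τ : Fin r → ℝ) (X Y Z : Fin n → ℝ) (v w u : Fin r → ℝ),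
      iteratedFDeriv ℝ 3 F (t, τ) ![(X, v), (Y, w), (Z, u)]
        = (∑ i, ∑ j, g i j * (circM t X Y + lam w • X + lam v • Y) i * Z j)
          + lam (circV v w) * (∑ j, (∑ i, g i j * e i) * Z j)
          + lam u * (∑ i, (∑ k, g k i * e k) * (circM t X Y + lam w • X + lam v • Y) i)
          + gV (circV v w) u := by
  intro t τ X Y Z v w u
  -- decomposition of F
  have hFeq : F = fun z : (Fin n → ℝ) × (Fin r → ℝ) =>
      ((FM z.1
        + ∑ s, ∑ i, ∑ j, ((1/2 * lam (Pi.single s 1) * g i j) • stmt8aux_sig n r s) z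
            * stmt8aux_rho n r i z * stmt8aux_rho n r j z)
        + ∑ s, ∑ k, ∑ j, ((1/2 * lam (circV (Pi.single s 1) (Pi.single k 1))
            * (∑ i, g i j * e i)) • stmt8aux_sig n r s) z
            * stmt8aux_sig n r k z * stmt8aux_rho n r j z)
        + ∑ s, ∑ k, ∑ j, ((1/6 * gV (circV (Pi.single s 1) (Pi.single k 1)) (Pi.single j 1))
            • stmt8aux_sig n r s) z * stmt8aux_sig n r k z * stmt8aux_sig n r j z := by
    funext z
    obtain ⟨t', τ'⟩ := z
    rw [hF t' τ']
    simp only [ContinuousLinearMap.coe_smul', Pi.smul_apply, stmt8aux_rho_apply,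
      stmt8aux_sig_apply, smul_eq_mul]
    congr 1
    · congr 1
      · congr 1
        rw [stmt8aux_csum12]
        refine Finset.sum_congr rfl fun s _ => Finset.sum_congr rfl fun i _ =>
          Finset.sum_congr rfl fun j _ => ?_
        ring
      · rw [stmt8aux_csum21]
        refine Finset.sum_congr rfl fun s _ => Finset.sum_congr rfl fun k _ =>
          Finset.sum_congr rfl fun j _ => ?_
        ring
    · rw [stmt8aux_csum3]
      refine Finset.sum_congr rfl fun s _ => Finset.sum_congr rfl fun k _ =>
        Finset.sum_congr rfl fun j _ => ?_
      ring
  -- smoothness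
  have hCmono : ∀ (l₁ l₂ l₃ : ((Fin n → ℝ) × (Fin r → ℝ)) →L[ℝ] ℝ),
      ContDiff ℝ (3 : ℕ) (fun z => l₁ z * l₂ z * l₃ z) := fun l₁ l₂ l₃ =>
    (l₁.contDiff.mul l₂.contDiff).mul l₃.contDiff
  have hC0 : ContDiff ℝ (3 : ℕ) (fun z : (Fin n → ℝ) × (Fin r → ℝ) => FM z.1) :=
    (hFM.of_le (by norm_cast)).comp contDiff_fst
  have hC1 : ContDiff ℝ (3 : ℕ) (fun z : (Fin n → ℝ) × (Fin r → ℝ) =>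
      ∑ s, ∑ i, ∑ j, ((1/2 * lam (Pi.single s 1) * g i j) • stmt8aux_sig n r s) z
        * stmt8aux_rho n r i z * stmt8aux_rho n r j z) :=
    ContDiff.sum fun s _ => ContDiff.sum fun i _ => ContDiff.sum fun j _ => hCmono _ _ _
  have hC2 : ContDiff ℝ (3 : ℕ) (fun z : (Fin n → ℝ) × (Fin r → ℝ) =>
      ∑ s, ∑ k, ∑ j, ((1/2 * lam (circV (Pi.single s 1) (Pi.single k 1))
        * (∑ i, g i j * e i)) • stmt8aux_sig n r s) z
        * stmt8aux_sig n r k z * stmt8aux_rho n r j z) :=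
    ContDiff.sum fun s _ => ContDiff.sum fun k _ => ContDiff.sum fun j _ => hCmono _ _ _
  have hC3 : ContDiff ℝ (3 : ℕ) (fun z : (Fin n → ℝ) × (Fin r → ℝ) =>
      ∑ s, ∑ k, ∑ j, ((1/6 * gV (circV (Pi.single s 1) (Pi.single k 1)) (Pi.single j 1))
        • stmt8aux_sig n r s) z * stmt8aux_sig n r k z * stmt8aux_sig n r j z) :=
    ContDiff.sum fun s _ => ContDiff.sum fun k _ => ContDiff.sum fun j _ => hCmono _ _ _
  rw [hFeq, iteratedFDeriv_add_apply' ((hC0.add hC1).add hC2).contDiffAt hC3.contDiffAt,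
    iteratedFDeriv_add_apply' (hC0.add hC1).contDiffAt hC2.contDiffAt,
    iteratedFDeriv_add_apply' hC0.contDiffAt hC1.contDiffAt]
  simp only [ContinuousMultilinearMap.add_apply]
  -- the FM piece
  have hD0 : iteratedFDeriv ℝ 3 (fun z : (Fin n → ℝ) × (Fin r → ℝ) => FM z.1) (t, τ)
      ![(X, v), (Y, w), (Z, u)] = iteratedFDeriv ℝ 3 FM t ![X, Y, Z] := by
    have hcomp : (fun z : (Fin n → ℝ) × (Fin r → ℝ) => FM z.1)
        = FM ∘ (ContinuousLinearMap.fst ℝ (Fin n → ℝ) (Fin r → ℝ)) := rfl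
    rw [hcomp, ContinuousLinearMap.iteratedFDeriv_comp_right _ hFM _ (by norm_cast),
      ContinuousMultilinearMap.compContinuousLinearMap_apply]
    congr 1
    funext i; fin_cases i <;> rfl
  -- the three polynomial pieces
  have hD1 : iteratedFDeriv ℝ 3 (fun z : (Fin n → ℝ) × (Fin r → ℝ) =>
      ∑ s, ∑ i, ∑ j, ((1/2 * lam (Pi.single s 1) * g i j) • stmt8aux_sig n r s) z
        * stmt8aux_rho n r i z * stmt8aux_rho n r j z) (t, τ) ![(X, v), (Y, w), (Z, u)]
      = ∑ s, ∑ i, ∑ j, (1/2 * lam (Pi.single s 1) * g i j) *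
          (v s * (Y i * Z j) + w s * (X i * Z j) + v s * (Z i * Y j)
            + u s * (X i * Y j) + w s * (Z i * X j) + u s * (Y i * X j)) := by
    rw [stmt8aux_d3_sum3 (f := fun s i j => fun z =>
      ((1/2 * lam (Pi.single s 1) * g i j) • stmt8aux_sig n r s) z
        * stmt8aux_rho n r i z * stmt8aux_rho n r j z) (fun s i j => hCmono _ _ _)]
    refine Finset.sum_congr rfl fun s _ => Finset.sum_congr rfl fun i _ =>
      Finset.sum_congr rfl fun j _ => ?_
    rw [stmt8aux_d3_mono]
    simp only [ContinuousLinearMap.coe_smul', Pi.smul_apply, smul_eq_mul,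
      stmt8aux_sig_apply, stmt8aux_rho_apply]
    ring
  have hD2 : iteratedFDeriv ℝ 3 (fun z : (Fin n → ℝ) × (Fin r → ℝ) =>
      ∑ s, ∑ k, ∑ j, ((1/2 * lam (circV (Pi.single s 1) (Pi.single k 1))
        * (∑ i, g i j * e i)) • stmt8aux_sig n r s) z
        * stmt8aux_sig n r k z * stmt8aux_rho n r j z) (t, τ) ![(X, v), (Y, w), (Z, u)]
      = ∑ s, ∑ k, ∑ j, (1/2 * lam (circV (Pi.single s 1) (Pi.single k 1))
          * (∑ i, g i j * e i)) *
          (v s * (w k * Z j) + w s * (v k * Z j) + v s * (u k * Y j)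
            + u s * (v k * Y j) + w s * (u k * X j) + u s * (w k * X j)) := by
    rw [stmt8aux_d3_sum3 (f := fun s k j => fun z =>
      ((1/2 * lam (circV (Pi.single s 1) (Pi.single k 1)) * (∑ i, g i j * e i))
        • stmt8aux_sig n r s) z * stmt8aux_sig n r k z * stmt8aux_rho n r j z)
      (fun s k j => hCmono _ _ _)]
    refine Finset.sum_congr rfl fun s _ => Finset.sum_congr rfl fun k _ =>
      Finset.sum_congr rfl fun j _ => ?_
    rw [stmt8aux_d3_mono]
    simp only [ContinuousLinearMap.coe_smul', Pi.smul_apply, smul_eq_mul,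
      stmt8aux_sig_apply, stmt8aux_rho_apply]
    ring
  have hD3 : iteratedFDeriv ℝ 3 (fun z : (Fin n → ℝ) × (Fin r → ℝ) =>
      ∑ s, ∑ k, ∑ j, ((1/6 * gV (circV (Pi.single s 1) (Pi.single k 1)) (Pi.single j 1))
        • stmt8aux_sig n r s) z * stmt8aux_sig n r k z * stmt8aux_sig n r j z) (t, τ)
        ![(X, v), (Y, w), (Z, u)]
      = ∑ s, ∑ k, ∑ j, (1/6 * gV (circV (Pi.single s 1) (Pi.single k 1)) (Pi.single j 1)) *
          (v s * (w k * u j) + w s * (v k * u j) + v s * (u k * w j)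
            + u s * (v k * w j) + w s * (u k * v j) + u s * (w k * v j)) := by
    rw [stmt8aux_d3_sum3 (f := fun s k j => fun z =>
      ((1/6 * gV (circV (Pi.single s 1) (Pi.single k 1)) (Pi.single j 1))
        • stmt8aux_sig n r s) z * stmt8aux_sig n r k z * stmt8aux_sig n r j z)
      (fun s k j => hCmono _ _ _)]
    refine Finset.sum_congr rfl fun s _ => Finset.sum_congr rfl fun k _ =>
      Finset.sum_congr rfl fun j _ => ?_
    rw [stmt8aux_d3_mono]
    simp only [ContinuousLinearMap.coe_smul', Pi.smul_apply, smul_eq_mul,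
      stmt8aux_sig_apply, stmt8aux_rho_apply]
    ring
  rw [hD0, hD1, hD2, hD3]
  -- basis expansions of the linear data
  have hone : ∀ {m : ℕ} (s : Fin m), (fun j => if s = j then (1:ℝ) else 0) = Pi.single s 1 := by
    intro m s; funext j; simp [Pi.single_apply, eq_comm]
  have hlam_exp : ∀ x : Fin r → ℝ, lam x = ∑ s, x s * lam (Pi.single s 1) := by
    intro x
    have h := lam.pi_apply_eq_sum_univ x
    simpa [hone, smul_eq_mul] using h
  have hlam2 : ∀ a b : Fin r → ℝ, lam (circV a b)
      = ∑ s, ∑ k, lam (circV (Pi.single s 1) (Pi.single k 1)) * (a s * b k) := by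
    intro a b
    have h1 : lam (circV a b) = ∑ s, a s * lam (circV (Pi.single s 1) b) := by
      have h := (lam.comp (circV.flip b)).pi_apply_eq_sum_univ a
      simpa [hone, smul_eq_mul, LinearMap.comp_apply, LinearMap.flip_apply] using h
    rw [h1]
    refine Finset.sum_congr rfl fun s _ => ?_
    have h2 : lam (circV (Pi.single s 1) b)
        = ∑ k, b k * lam (circV (Pi.single s 1) (Pi.single k 1)) := by
      have h := (lam.comp (circV (Pi.single s 1))).pi_apply_eq_sum_univ b
      simpa [hone, smul_eq_mul, LinearMap.comp_apply] using h
    rw [h2, Finset.mul_sum]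
    exact Finset.sum_congr rfl fun k _ => by ring
  have hgV3 : ∀ a b c : Fin r → ℝ, gV (circV a b) c
      = ∑ s, ∑ k, ∑ j, gV (circV (Pi.single s 1) (Pi.single k 1)) (Pi.single j 1)
          * (a s * (b k * c j)) := by
    intro a b c
    have h1 : gV (circV a b) c = ∑ s, a s * gV (circV (Pi.single s 1) b) c := by
      have h := ((gV.flip c).comp (circV.flip b)).pi_apply_eq_sum_univ a
      simpa [hone, smul_eq_mul, LinearMap.comp_apply, LinearMap.flip_apply] using h
    rw [h1]
    refine Finset.sum_congr rfl fun s _ => ?_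
    have h2 : gV (circV (Pi.single s 1) b) c
        = ∑ k, b k * gV (circV (Pi.single s 1) (Pi.single k 1)) c := by
      have h := ((gV.flip c).comp (circV (Pi.single s 1))).pi_apply_eq_sum_univ b
      simpa [hone, smul_eq_mul, LinearMap.comp_apply, LinearMap.flip_apply] using h
    rw [h2, Finset.mul_sum]
    refine Finset.sum_congr rfl fun k _ => ?_
    have h3 : gV (circV (Pi.single s 1) (Pi.single k 1)) c
        = ∑ j, c j * gV (circV (Pi.single s 1) (Pi.single k 1)) (Pi.single j 1) := by
      have h := (gV (circV (Pi.single s 1) (Pi.single k 1))).pi_apply_eq_sum_univ c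
      simpa [hone, smul_eq_mul] using h
    rw [h3, Finset.mul_sum, Finset.mul_sum]
    exact Finset.sum_congr rfl fun j _ => by ring
  -- symmetry helpers
  have hQsym : ∀ A B : Fin n → ℝ,
      (∑ i, ∑ j, g i j * A i * B j) = ∑ i, ∑ j, g i j * B i * A j := by
    intro A B
    rw [Finset.sum_comm]
    exact Finset.sum_congr rfl fun i _ => Finset.sum_congr rfl fun j _ => by
      rw [hgsymm]; ring
  have hgswap23 : ∀ a b c : Fin r → ℝ, gV (circV a b) c = gV (circV a c) b := by
    intro a b c
    calc gV (circV a b) c = gV (circV b a) c := by rw [hVcomm]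
      _ = gV b (circV a c) := hgVinv b a c
      _ = gV (circV a c) b := hgVsymm _ _
  -- the three summation collapses
  have hmir1 : ∀ (cv : Fin r → ℝ) (A B : Fin n → ℝ),
      (∑ s, ∑ i, ∑ j, (1/2 * lam (Pi.single s 1) * g i j) * (cv s * (A i * B j)))
        = 1/2 * lam cv * (∑ i, ∑ j, g i j * A i * B j) := by
    intro cv A B
    rw [hlam_exp cv, stmt8aux_csum12]
    refine Finset.sum_congr rfl fun s _ => Finset.sum_congr rfl fun i _ =>
      Finset.sum_congr rfl fun j _ => ?_
    ring
  have hmir2 : ∀ (a b : Fin r → ℝ) (A : Fin n → ℝ),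
      (∑ s, ∑ k, ∑ j, (1/2 * lam (circV (Pi.single s 1) (Pi.single k 1))
          * (∑ i, g i j * e i)) * (a s * (b k * A j)))
        = 1/2 * lam (circV a b) * (∑ j, (∑ i, g i j * e i) * A j) := by
    intro a b A
    rw [hlam2 a b, stmt8aux_csum21]
    refine Finset.sum_congr rfl fun s _ => Finset.sum_congr rfl fun k _ =>
      Finset.sum_congr rfl fun j _ => ?_
    ring
  have hmir3 : ∀ a b c : Fin r → ℝ,
      (∑ s, ∑ k, ∑ j, (1/6 * gV (circV (Pi.single s 1) (Pi.single k 1)) (Pi.single j 1))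
          * (a s * (b k * c j)))
        = 1/6 * gV (circV a b) c := by
    intro a b c
    rw [hgV3 a b c, stmt8aux_csum3]
    refine Finset.sum_congr rfl fun s _ => Finset.sum_congr rfl fun k _ =>
      Finset.sum_congr rfl fun j _ => ?_
    ring
  -- collapse the three polynomial sums
  have hS1 : (∑ s, ∑ i, ∑ j, (1/2 * lam (Pi.single s 1) * g i j) *
        (v s * (Y i * Z j) + w s * (X i * Z j) + v s * (Z i * Y j)
          + u s * (X i * Y j) + w s * (Z i * X j) + u s * (Y i * X j)))
      = lam v * (∑ i, ∑ j, g i j * Y i * Z j) + lam w * (∑ i, ∑ j, g i j * X i * Z j)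
        + lam u * (∑ i, ∑ j, g i j * X i * Y j) := by
    simp only [mul_add, Finset.sum_add_distrib]
    rw [hmir1 v Y Z, hmir1 w X Z, hmir1 v Z Y, hmir1 u X Y, hmir1 w Z X, hmir1 u Y X,
      hQsym Z Y, hQsym Z X, hQsym Y X]
    ring
  have hS2 : (∑ s, ∑ k, ∑ j, (1/2 * lam (circV (Pi.single s 1) (Pi.single k 1))
        * (∑ i, g i j * e i)) *
        (v s * (w k * Z j) + w s * (v k * Z j) + v s * (u k * Y j)
          + u s * (v k * Y j) + w s * (u k * X j) + u s * (w k * X j)))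
      = lam (circV v w) * (∑ j, (∑ i, g i j * e i) * Z j)
        + lam (circV v u) * (∑ j, (∑ i, g i j * e i) * Y j)
        + lam (circV w u) * (∑ j, (∑ i, g i j * e i) * X j) := by
    simp only [mul_add, Finset.sum_add_distrib]
    rw [hmir2 v w Z, hmir2 w v Z, hmir2 v u Y, hmir2 u v Y, hmir2 w u X, hmir2 u w X,
      show lam (circV w v) = lam (circV v w) from by rw [hVcomm],
      show lam (circV u v) = lam (circV v u) from by rw [hVcomm],
      show lam (circV u w) = lam (circV w u) from by rw [hVcomm]]
    ring
  have hS3 : (∑ s, ∑ k, ∑ j, (1/6 * gV (circV (Pi.single s 1) (Pi.single k 1)) (Pi.single j 1)) *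
        (v s * (w k * u j) + w s * (v k * u j) + v s * (u k * w j)
          + u s * (v k * w j) + w s * (u k * v j) + u s * (w k * v j)))
      = gV (circV v w) u := by
    simp only [mul_add, Finset.sum_add_distrib]
    rw [hmir3 v w u, hmir3 w v u, hmir3 v u w, hmir3 u v w, hmir3 w u v, hmir3 u w v,
      show gV (circV w v) u = gV (circV v w) u from by rw [hVcomm],
      show gV (circV v u) w = gV (circV v w) u from hgswap23 v u w,
      show gV (circV u v) w = gV (circV v w) u from by
        rw [show circV u v = circV v u from hVcomm u v]; exact hgswap23 v u w,
      show gV (circV w u) v = gV (circV v w) u from by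
        rw [hgswap23 w u v, show circV w v = circV v w from hVcomm w v],
      show gV (circV u w) v = gV (circV v w) u from by
        rw [show circV u w = circV w u from hVcomm u w, hgswap23 w u v,
          show circV w v = circV v w from hVcomm w v]]
    ring
  -- RHS decompositions
  have hpull2 : ∀ (c : ℝ) (f : Fin n → Fin n → ℝ),
      (∑ i, ∑ j, c * f i j) = c * ∑ i, ∑ j, f i j := by
    intro c f
    rw [Finset.mul_sum]
    exact Finset.sum_congr rfl fun i _ => (Finset.mul_sum _ _ _).symm
  have hpull1 : ∀ (c : ℝ) (f : Fin n → ℝ), (∑ i, c * f i) = c * ∑ i, f i :=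
    fun c f => (Finset.mul_sum _ _ _).symm
  have hRHS1 : (∑ i, ∑ j, g i j * (circM t X Y + lam w • X + lam v • Y) i * Z j)
      = (∑ i, ∑ j, g i j * circM t X Y i * Z j)
        + lam w * (∑ i, ∑ j, g i j * X i * Z j)
        + lam v * (∑ i, ∑ j, g i j * Y i * Z j) := by
    calc (∑ i, ∑ j, g i j * (circM t X Y + lam w • X + lam v • Y) i * Z j)
        = ∑ i, ∑ j, (g i j * circM t X Y i * Z j + lam w * (g i j * X i * Z j)
            + lam v * (g i j * Y i * Z j)) := by
          refine Finset.sum_congr rfl fun i _ => Finset.sum_congr rfl fun j _ => ?_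
          simp only [Pi.add_apply, Pi.smul_apply, smul_eq_mul]
          ring
      _ = (∑ i, ∑ j, g i j * circM t X Y i * Z j)
            + (∑ i, ∑ j, lam w * (g i j * X i * Z j))
            + (∑ i, ∑ j, lam v * (g i j * Y i * Z j)) := by
          simp only [Finset.sum_add_distrib]
      _ = (∑ i, ∑ j, g i j * circM t X Y i * Z j)
            + lam w * (∑ i, ∑ j, g i j * X i * Z j)
            + lam v * (∑ i, ∑ j, g i j * Y i * Z j) := by
          rw [hpull2 (lam w), hpull2 (lam v)]
  have hRHS3 : (∑ i, (∑ k, g k i * e k) * (circM t X Y + lam w • X + lam v • Y) i)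
      = (∑ i, (∑ k, g k i * e k) * circM t X Y i)
        + lam w * (∑ i, (∑ k, g k i * e k) * X i)
        + lam v * (∑ i, (∑ k, g k i * e k) * Y i) := by
    calc (∑ i, (∑ k, g k i * e k) * (circM t X Y + lam w • X + lam v • Y) i)
        = ∑ i, ((∑ k, g k i * e k) * circM t X Y i
            + lam w * ((∑ k, g k i * e k) * X i) + lam v * ((∑ k, g k i * e k) * Y i)) := by
          refine Finset.sum_congr rfl fun i _ => ?_
          simp only [Pi.add_apply, Pi.smul_apply, smul_eq_mul]
          ring
      _ = (∑ i, (∑ k, g k i * e k) * circM t X Y i)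
            + (∑ i, lam w * ((∑ k, g k i * e k) * X i))
            + (∑ i, lam v * ((∑ k, g k i * e k) * Y i)) := by
          simp only [Finset.sum_add_distrib]
      _ = (∑ i, (∑ k, g k i * e k) * circM t X Y i)
            + lam w * (∑ i, (∑ k, g k i * e k) * X i)
            + lam v * (∑ i, (∑ k, g k i * e k) * Y i) := by
          rw [hpull1 (lam w), hpull1 (lam v)]
  -- the circM sums in terms of the third derivative of FM
  have hcircZ : (∑ i, ∑ j, g i j * circM t X Y i * Z j)
      = ∑ i, ∑ j, ∑ k, iteratedFDeriv ℝ 3 FM t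
          ![Pi.single i 1, Pi.single j 1, Pi.single k 1] * X i * Y j * Z k := by
    calc (∑ i, ∑ j, g i j * circM t X Y i * Z j)
        = ∑ j, ∑ i, g i j * circM t X Y i * Z j := Finset.sum_comm
      _ = ∑ j, (∑ i, g i j * circM t X Y i) * Z j := by
          exact Finset.sum_congr rfl fun j _ => (Finset.sum_mul _ _ _).symm
      _ = ∑ j, (∑ a, ∑ b, iteratedFDeriv ℝ 3 FM t
            ![Pi.single a 1, Pi.single b 1, Pi.single j 1] * X a * Y b) * Z j := by
          exact Finset.sum_congr rfl fun j _ => by rw [hcircM t X Y j]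
      _ = ∑ a, ∑ b, ∑ j, iteratedFDeriv ℝ 3 FM t
            ![Pi.single a 1, Pi.single b 1, Pi.single j 1] * X a * Y b * Z j :=
          stmt8aux_swap3 _ _
  have hcircE : (∑ i, (∑ k, g k i * e k) * circM t X Y i)
      = ∑ i, ∑ j, g i j * X i * Y j := by
    calc (∑ i, (∑ k, g k i * e k) * circM t X Y i)
        = ∑ i, ∑ k, g k i * e k * circM t X Y i := by
          exact Finset.sum_congr rfl fun i _ => Finset.sum_mul _ _ _
      _ = ∑ k, ∑ i, g k i * e k * circM t X Y i := Finset.sum_comm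
      _ = ∑ k, e k * ∑ i, g i k * circM t X Y i := by
          refine Finset.sum_congr rfl fun k _ => ?_
          rw [Finset.mul_sum]
          refine Finset.sum_congr rfl fun i _ => ?_
          rw [hgsymm i k]; ring
      _ = ∑ k, e k * ∑ a, ∑ b, iteratedFDeriv ℝ 3 FM t
            ![Pi.single a 1, Pi.single b 1, Pi.single k 1] * X a * Y b := by
          exact Finset.sum_congr rfl fun k _ => by rw [hcircM t X Y k]
      _ = ∑ k, ∑ a, ∑ b, e k * (iteratedFDeriv ℝ 3 FM t
            ![Pi.single a 1, Pi.single b 1, Pi.single k 1] * X a * Y b) := by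
          refine Finset.sum_congr rfl fun k _ => ?_
          rw [Finset.mul_sum]
          exact Finset.sum_congr rfl fun a _ => Finset.mul_sum _ _ _
      _ = ∑ a, ∑ k, ∑ b, e k * (iteratedFDeriv ℝ 3 FM t
            ![Pi.single a 1, Pi.single b 1, Pi.single k 1] * X a * Y b) := Finset.sum_comm
      _ = ∑ a, ∑ b, ∑ k, e k * (iteratedFDeriv ℝ 3 FM t
            ![Pi.single a 1, Pi.single b 1, Pi.single k 1] * X a * Y b) :=
          Finset.sum_congr rfl fun a _ => Finset.sum_comm
      _ = ∑ a, ∑ b, g a b * X a * Y b := by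
          refine Finset.sum_congr rfl fun a _ => Finset.sum_congr rfl fun b _ => ?_
          calc (∑ k, e k * (iteratedFDeriv ℝ 3 FM t
                ![Pi.single a 1, Pi.single b 1, Pi.single k 1] * X a * Y b))
              = ∑ k, e k * iteratedFDeriv ℝ 3 FM t
                  ![Pi.single k 1, Pi.single a 1, Pi.single b 1] * (X a * Y b) := by
                refine Finset.sum_congr rfl fun k _ => ?_
                rw [stmt8aux_cycle hFM t (Pi.single a 1) (Pi.single b 1) (Pi.single k 1)]
                ring
            _ = (∑ k, e k * iteratedFDeriv ℝ 3 FM t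
                  ![Pi.single k 1, Pi.single a 1, Pi.single b 1]) * (X a * Y b) :=
                (Finset.sum_mul _ _ _).symm
            _ = g a b * (X a * Y b) := by rw [hunit t a b]
            _ = g a b * X a * Y b := by ring
  -- put everything together
  rw [stmt8aux_tri_basis (iteratedFDeriv ℝ 3 FM t) X Y Z, hS1, hS2, hS3, hRHS1, hRHS3,
    hcircZ, hcircE, hlammul v u, hlammul w u]
  ring
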